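/- Let M and δ be positive constants with M ≥ 2 + 2δ and δ ≥ 1, let α : ℝ → ℝ be given by α(t) = t − 1, and let w : ℝ → ℝ be defined by w(t) = M for t ≤ −1, w(t) = M + ((t+1)/2)(1 + δ − M) for t ∈ [−1, 1], and w(t) = 1 + δ for t ≥ 1. Then the weighted composition operator T̃_{α,w} on C₀(ℝ), defined by T̃_{α,w}(f) = w·(f∘α), and its inverse S̃_{α,w}, given by S̃_{α,w}(f) = (w∘α⁻¹)⁻¹·(f∘α⁻¹), are both topologically semi-transitive on C₀(ℝ), but neither T̃_{α,w} nor S̃_{α,w} is topologically Cesàro hyper-transitive on C₀(ℝ). -/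

import Mathlib

open scoped ZeroAtInfty

/-- A bounded linear operator `T` on a complex normed space is *topologically
semi-transitive* if for every pair of nonempty open subsets `O₁, O₂` there exist
`n ∈ ℕ` and `λ ∈ ℂ \ {0}` such that `λ • T^n(O₁) ∩ O₂ ≠ ∅`. -/
def IsSemiTransitive {E : Type*} [NormedAddCommGroup E] [NormedSpace ℂ E]
    (T : E →L[ℂ] E) : Prop :=
  ∀ O₁ O₂ : Set E, IsOpen O₁ → IsOpen O₂ → O₁.Nonempty → O₂.Nonempty →
    ∃ (n : ℕ) (lam : ℂ), 1 ≤ n ∧ lam ≠ 0 ∧ ∃ f ∈ O₁, lam • (T ^ n) f ∈ O₂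

/-- A bounded linear operator `T` on a complex normed space is *topologically Cesàro
hyper-transitive* if for every pair of nonempty open subsets `O₁, O₂` there exists a
strictly increasing sequence `(n_k)` of (positive) natural numbers such that
`n_k⁻¹ • T^{n_k}(O₁) ∩ O₂ ≠ ∅` for all `k`. -/
def IsCesaroHyperTransitive {E : Type*} [NormedAddCommGroup E] [NormedSpace ℂ E]
    (T : E →L[ℂ] E) : Prop :=
  ∀ O₁ O₂ : Set E, IsOpen O₁ → IsOpen O₂ → O₁.Nonempty → O₂.Nonempty →
    ∃ n : ℕ → ℕ, StrictMono n ∧ (∀ k, 1 ≤ n k) ∧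
      ∀ k, ∃ f ∈ O₁, ((n k : ℂ))⁻¹ • (T ^ n k) f ∈ O₂



lemma Tpow (w : ℝ → ℝ) (T : C₀(ℝ, ℂ) →L[ℂ] C₀(ℝ, ℂ))
    (hT : ∀ (f : C₀(ℝ, ℂ)) (t : ℝ), T f t = (w t : ℂ) * f (t - 1)) :
    ∀ (n : ℕ) (f : C₀(ℝ, ℂ)) (t : ℝ),
      (T ^ n) f t = ((∏ j ∈ Finset.range n, w (t - j) : ℝ) : ℂ) * f (t - n) := by
  intro n
  induction n with
  | zero => intro f t; simp
  | succ n ih =>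
    intro f t
    have h1 : (T ^ (n+1)) f = T ((T ^ n) f) := by rw [pow_succ']; rfl
    have hprod : (∏ j ∈ Finset.range (n+1), w (t - j)) =
        w t * ∏ j ∈ Finset.range n, w (t - 1 - j) := by
      rw [Finset.prod_range_succ']
      rw [mul_comm]
      congr 1
      · norm_num
      · apply Finset.prod_congr rfl; intro j _; congr 1; push_cast; ring
    have harg : t - ((n:ℕ)+1:ℕ) = t - 1 - (n:ℝ) := by push_cast; ring
    rw [h1, hT, ih, hprod, harg]
    push_cast
    ring

lemma Spow (w : ℝ → ℝ) (S : C₀(ℝ, ℂ) →L[ℂ] C₀(ℝ, ℂ))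
    (hS : ∀ (f : C₀(ℝ, ℂ)) (t : ℝ), S f t = ((w (t + 1) : ℂ))⁻¹ * f (t + 1)) :
    ∀ (n : ℕ) (f : C₀(ℝ, ℂ)) (t : ℝ),
      (S ^ n) f t = ((∏ j ∈ Finset.range n, w (t + j + 1) : ℝ) : ℂ)⁻¹ * f (t + n) := by
  intro n
  induction n with
  | zero => intro f t; simp
  | succ n ih =>
    intro f t
    have h1 : (S ^ (n+1)) f = S ((S ^ n) f) := by rw [pow_succ']; rfl
    have hprod : (∏ j ∈ Finset.range (n+1), w (t + j + 1)) =
        w (t + 1) * ∏ j ∈ Finset.range n, w (t + 1 + j + 1) := by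
      rw [Finset.prod_range_succ']
      rw [mul_comm]
      congr 1
      · norm_num
      · apply Finset.prod_congr rfl; intro j _; congr 1; push_cast; ring
    have harg : t + ((n:ℕ)+1:ℕ) = t + 1 + (n:ℝ) := by push_cast; ring
    rw [h1, hS, ih, hprod, harg]
    push_cast
    rw [mul_inv]
    ring

section
variable (M δ : ℝ) (w : ℝ → ℝ)

lemma wbounds (hδ0 : 0 < δ) (hMδ : 2 + 2 * δ ≤ M)
    (hw1 : ∀ t ≤ (-1 : ℝ), w t = M)
    (hw2 : ∀ t ∈ Set.Icc (-1 : ℝ) 1, w t = M + ((t + 1) / 2) * (1 + δ - M))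
    (hw3 : ∀ t ≥ (1 : ℝ), w t = 1 + δ) :
    ∀ t, 1 + δ ≤ w t ∧ w t ≤ M := by
  intro t
  rcases le_or_gt t (-1) with h | h
  · rw [hw1 t h]; constructor <;> nlinarith
  · rcases le_or_gt t 1 with h2 | h2
    · rw [hw2 t ⟨le_of_lt h, h2⟩]
      constructor <;> nlinarith
    · rw [hw3 t (le_of_lt h2)]
      constructor <;> nlinarith

-- crude bound: any product of w values ≤ M^n
lemma prod_w_le (hwM : ∀ t, 1 + δ ≤ w t ∧ w t ≤ M) (hδ0 : 0 < δ) (n : ℕ) (g : ℕ → ℝ) :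
    ∏ j ∈ Finset.range n, w (g j) ≤ M ^ n := by
  calc ∏ j ∈ Finset.range n, w (g j) ≤ ∏ j ∈ Finset.range n, M := by
        apply Finset.prod_le_prod
        · intro i _; nlinarith [(hwM (g i)).1]
        · intro i _; exact (hwM (g i)).2
    _ = M ^ n := by simp


lemma prod_w_ge (hwM : ∀ t, 1 + δ ≤ w t ∧ w t ≤ M) (hδ0 : 0 < δ) (n : ℕ) (g : ℕ → ℝ) :
    (1+δ) ^ n ≤ ∏ j ∈ Finset.range n, w (g j) := by
  calc ((1+δ)) ^ n = ∏ j ∈ Finset.range n, (1+δ) := by simp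
    _ ≤ ∏ j ∈ Finset.range n, w (g j) := by
        apply Finset.prod_le_prod
        · intro i _; positivity
        · intro i _; exact (hwM (g i)).1

lemma one_le_prod_w (hwM : ∀ t, 1 + δ ≤ w t ∧ w t ≤ M) (hδ0 : 0 < δ) (n : ℕ) (g : ℕ → ℝ) :
    1 ≤ ∏ j ∈ Finset.range n, w (g j) := by
  have hδ1 : (1:ℝ) ≤ 1 + δ := by nlinarith
  exact le_trans (one_le_pow₀ hδ1) (prod_w_ge M δ w hwM hδ0 n g)


-- main upper bound for T-products: for s ≥ -R
lemma prodT_le (hδ0 : 0 < δ) (hMδ : 2 + 2 * δ ≤ M)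
    (hwM : ∀ t, 1 + δ ≤ w t ∧ w t ≤ M)
    (hw3 : ∀ t ≥ (1 : ℝ), w t = 1 + δ)
    (R : ℕ) (s : ℝ) (hs : -(R:ℝ) ≤ s) :
    ∀ n : ℕ, ∏ j ∈ Finset.range n, w (s + n - j) ≤ M ^ (R+1) * (1+δ) ^ n := by
  have hM1 : (1:ℝ) ≤ M := by nlinarith
  have hδ1 : (1:ℝ) ≤ 1 + δ := by nlinarith
  intro n
  induction n with
  | zero => simpa using one_le_pow₀ hM1 (n := R+1)
  | succ n ih =>
    have hre : ∏ j ∈ Finset.range (n+1), w (s + (n+1:ℕ) - j)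
        = (∏ j ∈ Finset.range n, w (s + n - j)) * w (s + n + 1) := by
      rw [Finset.prod_range_succ']
      congr 1
      · apply Finset.prod_congr rfl; intro j _; congr 1; push_cast; ring
      · congr 1; push_cast; ring
    rw [hre]
    rcases le_or_gt 1 (s + n + 1) with hc | hc
    · rw [hw3 _ hc, pow_succ]
      have h0 : (0:ℝ) ≤ 1 + δ := by linarith
      calc (∏ j ∈ Finset.range n, w (s + n - j)) * (1+δ)
          ≤ (M ^ (R+1) * (1+δ)^n) * (1+δ) := by
            apply mul_le_mul_of_nonneg_right ih h0
        _ = M ^ (R+1) * ((1+δ)^n * (1+δ)) := by ring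
    · -- s + n + 1 < 1, so n < -s ≤ R, n+1 ≤ R
      have hnR : n + 1 ≤ R := by
        have : (n:ℝ) < (R:ℝ) := by linarith
        exact_mod_cast Nat.succ_le_of_lt (by exact_mod_cast this)
      have crude : (∏ j ∈ Finset.range n, w (s + n - j)) * w (s + n + 1) ≤ M ^ (n+1) := by
        have := prod_w_le M δ w hwM hδ0 (n+1) (fun j => if j = n then s + n + 1 else s + n - j)
        calc (∏ j ∈ Finset.range n, w (s + n - j)) * w (s + n + 1)
            = ∏ j ∈ Finset.range (n+1), w (if j = n then s + n + 1 else s + n - j) := by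
              rw [Finset.prod_range_succ]
              simp only [if_pos rfl]
              congr 1
              apply Finset.prod_congr rfl
              intro j hj
              rw [if_neg (Nat.ne_of_lt (Finset.mem_range.mp hj))]
          _ ≤ M ^ (n+1) := this
      calc (∏ j ∈ Finset.range n, w (s + n - j)) * w (s + n + 1) ≤ M ^ (n+1) := crude
        _ ≤ M ^ (R+1) := pow_le_pow_right₀ hM1 (by omega)
        _ ≤ M ^ (R+1) * (1+δ)^(n+1) := by nlinarith [pow_pos (by positivity : (0:ℝ) < M) (R+1), one_le_pow₀ hδ1 (n := n+1)]
end

section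
variable (M δ : ℝ) (w : ℝ → ℝ)

lemma prodS_ge (hδ0 : 0 < δ) (hMδ : 2 + 2 * δ ≤ M)
    (hwM : ∀ t, 1 + δ ≤ w t ∧ w t ≤ M)
    (hw1 : ∀ t ≤ (-1 : ℝ), w t = M) (R : ℕ) :
    ∀ (n : ℕ) (t : ℝ), t + n ≤ R →
      M ^ n ≤ M ^ (R+1) * ∏ j ∈ Finset.range n, w (t + j + 1) := by
  have hM1 : (1:ℝ) ≤ M := by nlinarith
  have hδ1 : (1:ℝ) ≤ 1 + δ := by nlinarith
  have hone : ∀ (n : ℕ) (g : ℕ → ℝ), (1:ℝ) ≤ ∏ j ∈ Finset.range n, w (g j) :=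
    fun n g => le_trans (one_le_pow₀ hδ1) (prod_w_ge M δ w hwM hδ0 n g)
  intro n
  induction n with
  | zero => intro t _; simpa using one_le_pow₀ hM1 (n := R+1)
  | succ n ih =>
    intro t ht
    have hre : ∏ j ∈ Finset.range (n+1), w (t + j + 1)
        = (∏ j ∈ Finset.range n, w ((t+1) + j + 1)) * w (t + 1) := by
      rw [Finset.prod_range_succ']
      congr 1
      · apply Finset.prod_congr rfl; intro j _; congr 1; push_cast; ring
      · congr 1; push_cast; ring
    rw [hre]
    rcases le_or_gt (t + 1) (-1) with hc | hc
    · have hw : w (t + 1) = M := hw1 _ hc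
      rw [hw]
      have ih' := ih (t+1) (by push_cast at ht ⊢; linarith)
      calc M ^ (n+1) = M ^ n * M := by ring
        _ ≤ (M ^ (R+1) * ∏ j ∈ Finset.range n, w ((t+1) + j + 1)) * M := by
            apply mul_le_mul_of_nonneg_right ih' (by linarith)
        _ = M ^ (R+1) * ((∏ j ∈ Finset.range n, w ((t+1) + j + 1)) * M) := by ring
    · have hnR : n + 1 ≤ R + 1 := by
        have h1 : ((n:ℝ)+1) < (R:ℝ)+2 := by push_cast at ht; linarith
        have h2 : n+1 < R+2 := by exact_mod_cast h1
        omega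
      have h3 : (1:ℝ) ≤ (∏ j ∈ Finset.range n, w ((t+1) + j + 1)) * w (t + 1) := by
        have := hone n (fun j => (t+1) + j + 1)
        nlinarith [(hwM (t+1)).1]
      calc M ^ (n+1) ≤ M ^ (R+1) := pow_le_pow_right₀ hM1 hnR
        _ ≤ M ^ (R+1) * ((∏ j ∈ Finset.range n, w ((t+1) + j + 1)) * w (t + 1)) := by
            nlinarith [pow_pos (show (0:ℝ) < M by linarith) (R+1)]
end

section
open ZeroAtInftyContinuousMap

lemma C0.norm_apply_le (f : C₀(ℝ, ℂ)) (t : ℝ) : ‖f t‖ ≤ ‖f‖ := by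
  rw [← ZeroAtInftyContinuousMap.norm_toBCF_eq_norm]
  exact f.toBCF.norm_coe_le_norm t

lemma C0.norm_le_of (f : C₀(ℝ, ℂ)) (C : ℝ) (hC : 0 ≤ C) (h : ∀ t, ‖f t‖ ≤ C) : ‖f‖ ≤ C := by
  rw [← ZeroAtInftyContinuousMap.norm_toBCF_eq_norm]
  exact (BoundedContinuousFunction.norm_le hC).2 h

variable (M δ : ℝ) (w : ℝ → ℝ)

lemma normT_supp (hδ0 : 0 < δ) (hMδ : 2 + 2 * δ ≤ M)
    (hwM : ∀ t, 1 + δ ≤ w t ∧ w t ≤ M)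
    (hw3 : ∀ t ≥ (1 : ℝ), w t = 1 + δ)
    (T : C₀(ℝ, ℂ) →L[ℂ] C₀(ℝ, ℂ))
    (hT : ∀ (f : C₀(ℝ, ℂ)) (t : ℝ), T f t = (w t : ℂ) * f (t - 1))
    (R : ℕ) (f : C₀(ℝ, ℂ)) (hf : ∀ t : ℝ, (R:ℝ) < |t| → f t = 0) (n : ℕ) :
    ‖(T ^ n) f‖ ≤ M ^ (R+1) * (1+δ) ^ n * ‖f‖ := by
  have hM0 : (0:ℝ) < M := by linarith
  have hδ1 : (0:ℝ) < 1 + δ := by linarith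
  apply C0.norm_le_of
  · positivity
  intro t
  rw [Tpow w T hT n f t, norm_mul, Complex.norm_real, Real.norm_eq_abs]
  rcases le_or_gt (|t - n|) R with hc | hc
  · have hprod : ∏ j ∈ Finset.range n, w (t - j) ≤ M ^ (R+1) * (1+δ) ^ n := by
      have := prodT_le M δ w hδ0 hMδ hwM hw3 R (t - n) (by cases abs_le.mp hc; linarith) n
      calc ∏ j ∈ Finset.range n, w (t - j)
          = ∏ j ∈ Finset.range n, w ((t - n) + n - j) := by
            apply Finset.prod_congr rfl; intro j _; congr 1; ring
        _ ≤ M ^ (R+1) * (1+δ) ^ n := this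
    have hpos : (0:ℝ) ≤ ∏ j ∈ Finset.range n, w (t - j) := by
      have := prod_w_ge M δ w hwM hδ0 n (fun j => t - j)
      nlinarith [pow_pos hδ1 n]
    rw [abs_of_nonneg hpos]
    have h2 := C0.norm_apply_le f (t - n)
    have h3 : (0:ℝ) ≤ ‖f (t - n)‖ := norm_nonneg _
    nlinarith
  · rw [hf _ hc]
    simp
    positivity

lemma normS_supp (hδ0 : 0 < δ) (hMδ : 2 + 2 * δ ≤ M)
    (hwM : ∀ t, 1 + δ ≤ w t ∧ w t ≤ M)
    (hw1 : ∀ t ≤ (-1 : ℝ), w t = M)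
    (S : C₀(ℝ, ℂ) →L[ℂ] C₀(ℝ, ℂ))
    (hS : ∀ (f : C₀(ℝ, ℂ)) (t : ℝ), S f t = ((w (t + 1) : ℂ))⁻¹ * f (t + 1))
    (R : ℕ) (f : C₀(ℝ, ℂ)) (hf : ∀ t : ℝ, (R:ℝ) < |t| → f t = 0) (n : ℕ) :
    ‖(S ^ n) f‖ ≤ M ^ (R+1) * (M⁻¹) ^ n * ‖f‖ := by
  have hM0 : (0:ℝ) < M := by linarith
  have hδ1 : (0:ℝ) < 1 + δ := by linarith
  apply C0.norm_le_of
  · positivity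
  intro t
  rw [Spow w S hS n f t, norm_mul, norm_inv, Complex.norm_real, Real.norm_eq_abs]
  rcases le_or_gt (|t + n|) R with hc | hc
  · have hppos : (0:ℝ) < ∏ j ∈ Finset.range n, w (t + j + 1) := by
      have := prod_w_ge M δ w hwM hδ0 n (fun j => t + j + 1)
      nlinarith [pow_pos hδ1 n]
    have hprod := prodS_ge M δ w hδ0 hMδ hwM hw1 R n t (by cases abs_le.mp hc; linarith)
    rw [abs_of_pos hppos]
    have h2 := C0.norm_apply_le f (t + n)
    have h3 : (0:ℝ) ≤ ‖f (t + n)‖ := norm_nonneg _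
    have hinv : (∏ j ∈ Finset.range n, w (t + j + 1))⁻¹ ≤ M ^ (R+1) * (M⁻¹) ^ n := by
      rw [inv_le_iff_one_le_mul₀ hppos]
      have hMn : (0:ℝ) < M ^ n := pow_pos hM0 n
      have : M ^ (R+1) * (M⁻¹) ^ n = M ^ (R+1) / M ^ n := by
        rw [inv_pow]; ring
      rw [this]
      rw [div_mul_eq_mul_div, le_div_iff₀ hMn]
      linarith [hprod]
    calc (∏ j ∈ Finset.range n, w (t + j + 1))⁻¹ * ‖f (t + n)‖
        ≤ (M ^ (R+1) * (M⁻¹) ^ n) * ‖f‖ := by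
          apply mul_le_mul hinv h2 h3
          positivity
      _ = M ^ (R+1) * (M⁻¹) ^ n * ‖f‖ := by ring
  · rw [hf _ hc]
    simp
    positivity

lemma normT_ge (hδ0 : 0 < δ) (hMδ : 2 + 2 * δ ≤ M)
    (hwM : ∀ t, 1 + δ ≤ w t ∧ w t ≤ M)
    (T : C₀(ℝ, ℂ) →L[ℂ] C₀(ℝ, ℂ))
    (hT : ∀ (f : C₀(ℝ, ℂ)) (t : ℝ), T f t = (w t : ℂ) * f (t - 1))
    (f : C₀(ℝ, ℂ)) (n : ℕ) :
    (1+δ) ^ n * ‖f‖ ≤ ‖(T ^ n) f‖ := by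
  have hδ1 : (0:ℝ) < 1 + δ := by linarith
  have hpn : (0:ℝ) < (1+δ) ^ n := pow_pos hδ1 n
  have key : ‖f‖ ≤ ((1+δ) ^ n)⁻¹ * ‖(T ^ n) f‖ := by
    apply C0.norm_le_of
    · positivity
    intro s
    have h1 := Tpow w T hT n f (s + n)
    have h2 : s + (n:ℝ) - n = s := by ring
    rw [h2] at h1
    have h3 : ‖(T ^ n) f (s + n)‖ = (∏ j ∈ Finset.range n, w (s + n - j)) * ‖f s‖ := by
      rw [h1, norm_mul, Complex.norm_real, Real.norm_eq_abs, abs_of_pos]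
      have := prod_w_ge M δ w hwM hδ0 n (fun j => s + n - j)
      nlinarith
    have h4 := C0.norm_apply_le ((T ^ n) f) (s + n)
    have h5 := prod_w_ge M δ w hwM hδ0 n (fun j => s + n - j)
    rw [h3] at h4
    rw [le_inv_mul_iff₀ hpn]
    nlinarith [norm_nonneg (f s)]
  calc (1+δ) ^ n * ‖f‖ ≤ (1+δ) ^ n * (((1+δ) ^ n)⁻¹ * ‖(T ^ n) f‖) := by
        apply mul_le_mul_of_nonneg_left key (le_of_lt hpn)
    _ = ‖(T ^ n) f‖ := by field_simp

lemma normS_le (hδ0 : 0 < δ) (hMδ : 2 + 2 * δ ≤ M)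
    (hwM : ∀ t, 1 + δ ≤ w t ∧ w t ≤ M)
    (S : C₀(ℝ, ℂ) →L[ℂ] C₀(ℝ, ℂ))
    (hS : ∀ (f : C₀(ℝ, ℂ)) (t : ℝ), S f t = ((w (t + 1) : ℂ))⁻¹ * f (t + 1))
    (f : C₀(ℝ, ℂ)) (n : ℕ) :
    ‖(S ^ n) f‖ ≤ ((1+δ)⁻¹) ^ n * ‖f‖ := by
  have hδ1 : (0:ℝ) < 1 + δ := by linarith
  have hpn : (0:ℝ) < (1+δ) ^ n := pow_pos hδ1 n
  apply C0.norm_le_of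
  · positivity
  intro t
  rw [Spow w S hS n f t, norm_mul, norm_inv, Complex.norm_real, Real.norm_eq_abs]
  have hppos : (0:ℝ) < ∏ j ∈ Finset.range n, w (t + j + 1) := by
    have := prod_w_ge M δ w hwM hδ0 n (fun j => t + j + 1)
    nlinarith
  rw [abs_of_pos hppos]
  have hinv : (∏ j ∈ Finset.range n, w (t + j + 1))⁻¹ ≤ ((1+δ)⁻¹) ^ n := by
    rw [inv_pow]
    apply inv_anti₀ hpn
    exact prod_w_ge M δ w hwM hδ0 n (fun j => t + j + 1)
  apply mul_le_mul hinv (C0.norm_apply_le f (t + n)) (norm_nonneg _)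
  positivity
end



lemma trunc (f : C₀(ℝ, ℂ)) (ε : ℝ) (hε : 0 < ε) :
    ∃ (R : ℕ) (f' : C₀(ℝ, ℂ)), (∀ t : ℝ, (R:ℝ) < |t| → f' t = 0) ∧ ‖f - f'‖ < ε := by
  have hz : Filter.Tendsto f (Filter.cocompact ℝ) (nhds 0) := zero_at_infty f
  have hev : ∀ᶠ t in Filter.cocompact ℝ, ‖f t‖ < ε / 2 := by
    have := Metric.tendsto_nhds.mp hz (ε/2) (by linarith)
    simpa [dist_zero_right] using this
  obtain ⟨K, hKc, hK⟩ := Filter.hasBasis_cocompact.eventually_iff.mp hev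
  obtain ⟨r, hr⟩ := hKc.isBounded.subset_closedBall 0
  set R : ℕ := ⌈r⌉₊ + 1 with hR
  have hrR : r ≤ (R:ℝ) - 1 := by
    have := Nat.le_ceil r
    push_cast [hR]
    push_cast at this
    linarith
  -- cutoff
  set χ : ℝ → ℝ := fun t => max 0 (min 1 ((R:ℝ) - |t|)) with hχ
  have hχ0 : ∀ t, 0 ≤ χ t := fun t => le_max_left _ _
  have hχ1 : ∀ t, χ t ≤ 1 := fun t => max_le (by norm_num) (min_le_left _ _)
  have hχc : Continuous χ :=
    continuous_const.max (continuous_const.min (continuous_const.sub continuous_abs))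
  have hχout : ∀ t : ℝ, (R:ℝ) ≤ |t| → χ t = 0 := by
    intro t ht
    simp only [hχ]
    rw [max_eq_left]
    exact min_le_of_right_le (by linarith)
  have hχin : ∀ t : ℝ, |t| ≤ (R:ℝ) - 1 → χ t = 1 := by
    intro t ht
    simp only [hχ]
    rw [min_eq_left (by linarith), max_eq_right (by norm_num)]
  set f' : C₀(ℝ, ℂ) := ZeroAtInftyContinuousMap.mk
    ⟨fun t => (χ t : ℂ) * f t, (Complex.continuous_ofReal.comp hχc).mul (map_continuous f)⟩
    (by
      apply squeeze_zero_norm (a := fun t : ℝ => ‖f t‖)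
      · intro t
        simp only [ContinuousMap.coe_mk, norm_mul, Complex.norm_real, Real.norm_eq_abs]
        have := abs_of_nonneg (hχ0 t)
        nlinarith [norm_nonneg (f t), hχ1 t, hχ0 t, abs_nonneg (χ t)]
      · simpa using hz.norm) with hf'
  refine ⟨R, f', ?_, ?_⟩
  · intro t ht
    show (χ t : ℂ) * f t = 0
    rw [hχout t (le_of_lt ht)]
    simp
  · have : ‖f - f'‖ ≤ ε / 2 := by
      apply C0.norm_le_of _ _ (by linarith)
      intro t
      have happ : (f - f') t = f t - (χ t : ℂ) * f t := by
        simp [hf']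
      rw [happ]
      rcases le_or_gt (|t|) ((R:ℝ) - 1) with hc | hc
      · rw [hχin t hc]
        simp
        linarith
      · have hfK : ‖f t‖ < ε / 2 := by
          apply hK
          simp only [Set.mem_compl_iff]
          intro htK
          have := hr htK
          rw [Metric.mem_closedBall, Real.dist_eq, sub_zero] at this
          linarith
        have : ‖f t - (χ t : ℂ) * f t‖ = (1 - χ t) * ‖f t‖ := by
          have h1 : f t - (χ t : ℂ) * f t = ((1 - χ t : ℝ) : ℂ) * f t := by
            push_cast; ring
          rw [h1, norm_mul, Complex.norm_real, Real.norm_eq_abs,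
            abs_of_nonneg (by nlinarith [hχ1 t] : (0:ℝ) ≤ 1 - χ t)]
        rw [this]
        nlinarith [norm_nonneg (f t), hχ0 t, hχ1 t]
    linarith

noncomputable def g0 : C₀(ℝ, ℂ) := ZeroAtInftyContinuousMap.mk
  ⟨fun t => ((2 * (1 + t^2)⁻¹ : ℝ) : ℂ), by
    apply Complex.continuous_ofReal.comp
    apply Continuous.mul continuous_const
    apply Continuous.inv₀ (by continuity)
    intro t; positivity⟩
  (by
    have h1 : Filter.Tendsto (fun t : ℝ => 1 + t^2) (Filter.cocompact ℝ) Filter.atTop := by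
      apply Filter.tendsto_atTop_mono (f := fun t : ℝ => ‖t‖)
      · intro t
        simp only [Real.norm_eq_abs]
        nlinarith [sq_abs t, sq_nonneg (|t| - 1), abs_nonneg t]
      · exact tendsto_norm_cocompact_atTop
    have h2 : Filter.Tendsto (fun t : ℝ => 2 * (1 + t^2)⁻¹) (Filter.cocompact ℝ) (nhds 0) := by
      have := (tendsto_inv_atTop_zero.comp h1).const_mul (2:ℝ)
      simpa using this
    have h3 := (Complex.continuous_ofReal.tendsto 0).comp h2
    rw [Complex.ofReal_zero] at h3
    exact h3)

lemma g0_norm : (2:ℝ) ≤ ‖g0‖ := by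
  have := C0.norm_apply_le g0 0
  have h0 : g0 0 = ((2:ℝ):ℂ) := by
    show ((2 * (1 + (0:ℝ)^2)⁻¹ : ℝ) : ℂ) = ((2:ℝ):ℂ)
    norm_num
  rw [h0] at this
  simpa using this

set_option maxHeartbeats 1000000 in
lemma key_semitrans (A B : C₀(ℝ, ℂ) →L[ℂ] C₀(ℝ, ℂ)) (a b : ℝ) (c : ℕ → ℝ)
    (ha : 0 < a) (hb : 0 < b) (hab : a * b < 1) (hc : ∀ R, 0 < c R)
    (hAB : ∀ f, A (B f) = f)
    (hA : ∀ (R : ℕ) (f : C₀(ℝ, ℂ)), (∀ t : ℝ, (R:ℝ) < |t| → f t = 0) →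
      ∀ n, ‖(A ^ n) f‖ ≤ c R * a ^ n * ‖f‖)
    (hB : ∀ (R : ℕ) (f : C₀(ℝ, ℂ)), (∀ t : ℝ, (R:ℝ) < |t| → f t = 0) →
      ∀ n, ‖(B ^ n) f‖ ≤ c R * b ^ n * ‖f‖) :
    IsSemiTransitive A := by
  -- powers cancel
  have hABpow : ∀ (n : ℕ) (f : C₀(ℝ, ℂ)), (A ^ n) ((B ^ n) f) = f := by
    intro n
    induction n with
    | zero => intro f; simp
    | succ n ih =>
      intro f
      rw [pow_succ A, pow_succ' B]
      rw [ContinuousLinearMap.mul_apply, ContinuousLinearMap.mul_apply]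
      rw [hAB ((B ^ n) f)]
      exact ih f
  intro O₁ O₂ hO₁ hO₂ hne₁ hne₂
  obtain ⟨f₀, hf₀⟩ := hne₁
  obtain ⟨g₀, hg₀⟩ := hne₂
  obtain ⟨ε, hε, hball1⟩ := Metric.isOpen_iff.mp hO₁ f₀ hf₀
  obtain ⟨ε', hε', hball2⟩ := Metric.isOpen_iff.mp hO₂ g₀ hg₀
  obtain ⟨R₁, f', hf's, hf'⟩ := trunc f₀ (ε/2) (by linarith)
  obtain ⟨R₂, g', hg's, hg'⟩ := trunc g₀ (ε'/2) (by linarith)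
  set R : ℕ := max R₁ R₂ with hR
  have hf'sR : ∀ t : ℝ, (R:ℝ) < |t| → f' t = 0 := by
    intro t ht
    apply hf's
    have : (R₁:ℝ) ≤ (R:ℝ) := by exact_mod_cast Nat.cast_le.mpr (le_max_left _ _)
    linarith
  have hg'sR : ∀ t : ℝ, (R:ℝ) < |t| → g' t = 0 := by
    intro t ht
    apply hg's
    have : (R₂:ℝ) ≤ (R:ℝ) := by exact_mod_cast Nat.cast_le.mpr (le_max_right _ _)
    linarith
  -- choose n
  set K : ℝ := c R * c R * (‖f'‖ + 1) * (‖g'‖ + 1) with hK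
  have hKpos : 0 < K := by
    have := hc R
    have h1 : (0:ℝ) < ‖f'‖ + 1 := by positivity
    have h2 : (0:ℝ) < ‖g'‖ + 1 := by positivity
    positivity
  have htend : Filter.Tendsto (fun n : ℕ => K * (a*b) ^ n) Filter.atTop (nhds 0) := by
    have h0 : (0:ℝ) ≤ a * b := by positivity
    simpa using (tendsto_pow_atTop_nhds_zero_of_lt_one h0 hab).const_mul K
  have hev : ∀ᶠ n : ℕ in Filter.atTop, K * (a*b) ^ n < ε * ε' / 4 := by
    apply (htend.eventually (gt_mem_nhds (show (0:ℝ) < ε * ε' / 4 by positivity))).mono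
    intro n hn
    exact hn
  obtain ⟨n, hnK, hn1⟩ := (hev.and (Filter.eventually_ge_atTop 1)).exists
  -- bounds
  set An : ℝ := c R * a ^ n * (‖f'‖ + 1) with hAn
  set Bn : ℝ := c R * b ^ n * (‖g'‖ + 1) with hBn
  have hAnpos : 0 < An := by have := hc R; positivity
  have hBnpos : 0 < Bn := by have := hc R; positivity
  have hABlt : An * Bn < ε * ε' / 4 := by
    have : An * Bn = K * (a*b) ^ n := by rw [hAn, hBn, hK, mul_pow]; ring
    rw [this]; exact hnK
  -- choose lam
  have hlt : 2 * Bn / ε < ε' / (2 * An) := by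
    rw [div_lt_div_iff₀ (by linarith) (by linarith)]
    nlinarith
  set l : ℝ := (2 * Bn / ε + ε' / (2 * An)) / 2 with hl
  have hl1 : 2 * Bn / ε < l := by rw [hl]; linarith
  have hl2 : l < ε' / (2 * An) := by rw [hl]; linarith
  have hlpos : 0 < l := lt_of_le_of_lt (by positivity) hl1
  have hlA : l * An < ε' / 2 := by
    have := (lt_div_iff₀ (by linarith : (0:ℝ) < 2 * An)).mp hl2
    nlinarith
  have hlB : l⁻¹ * Bn < ε / 2 := by
    have h2 : 2 * Bn < ε * l := by
      have := (div_lt_iff₀ (by linarith : (0:ℝ) < ε)).mp hl1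
      linarith
    rw [inv_mul_eq_div, div_lt_iff₀ hlpos]
    nlinarith
  -- norms of the building blocks
  have hlC : ‖((l:ℝ) : ℂ)‖ = l := by
    rw [Complex.norm_real, Real.norm_eq_abs, abs_of_pos hlpos]
  have hlCinv : ‖(((l:ℝ) : ℂ))⁻¹‖ = l⁻¹ := by rw [norm_inv, hlC]
  have hlne : ((l:ℝ) : ℂ) ≠ 0 := Complex.ofReal_ne_zero.mpr (ne_of_gt hlpos)
  have hBh : ‖(B ^ n) g'‖ ≤ Bn := by
    calc ‖(B ^ n) g'‖ ≤ c R * b ^ n * ‖g'‖ := hB R g' hg'sR n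
      _ ≤ Bn := by
          rw [hBn]
          have h0 : (0:ℝ) ≤ c R * b ^ n := mul_nonneg (le_of_lt (hc R)) (le_of_lt (pow_pos hb n))
          have h1 : ‖g'‖ ≤ ‖g'‖ + 1 := by linarith
          calc c R * b ^ n * ‖g'‖ ≤ c R * b ^ n * (‖g'‖ + 1) :=
                mul_le_mul_of_nonneg_left h1 h0
            _ = c R * b ^ n * (‖g'‖ + 1) := rfl
  have hAf : ‖(A ^ n) f'‖ ≤ An := by
    calc ‖(A ^ n) f'‖ ≤ c R * a ^ n * ‖f'‖ := hA R f' hf'sR n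
      _ ≤ An := by
          rw [hAn]
          have h0 : (0:ℝ) ≤ c R * a ^ n := mul_nonneg (le_of_lt (hc R)) (le_of_lt (pow_pos ha n))
          have h1 : ‖f'‖ ≤ ‖f'‖ + 1 := by linarith
          exact mul_le_mul_of_nonneg_left h1 h0
  set f : C₀(ℝ, ℂ) := f' + (((l:ℝ) : ℂ))⁻¹ • (B ^ n) g' with hfdef
  refine ⟨n, ((l:ℝ) : ℂ), hn1, hlne, f, ?_, ?_⟩
  · apply hball1
    rw [Metric.mem_ball, dist_eq_norm]
    have h1 : f - f₀ = (f' - f₀) + (((l:ℝ) : ℂ))⁻¹ • (B ^ n) g' := by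
      rw [hfdef]; abel
    rw [h1]
    calc ‖(f' - f₀) + (((l:ℝ) : ℂ))⁻¹ • (B ^ n) g'‖
        ≤ ‖f' - f₀‖ + ‖(((l:ℝ) : ℂ))⁻¹ • (B ^ n) g'‖ := norm_add_le _ _
      _ < ε := by
          have hns := norm_smul (β := C₀(ℝ, ℂ)) ((((l:ℝ) : ℂ))⁻¹) ((B ^ n) g')
          rw [hlCinv] at hns
          have h2 : l⁻¹ * ‖(B ^ n) g'‖ ≤ l⁻¹ * Bn :=
            mul_le_mul_of_nonneg_left hBh (by positivity)
          have h7 : ‖f' - f₀‖ = ‖f₀ - f'‖ := norm_sub_rev _ _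
          rw [hns, h7]
          linarith
  · apply hball2
    rw [Metric.mem_ball, dist_eq_norm]
    have h3 : (A ^ n) f = (A ^ n) f' + (((l:ℝ) : ℂ))⁻¹ • g' := by
      rw [hfdef, map_add, map_smul, hABpow n g']
    have h4 : ((l:ℝ) : ℂ) • (A ^ n) f = ((l:ℝ) : ℂ) • (A ^ n) f' + g' := by
      rw [h3]
      match_scalars
      · ring
      · field_simp
    rw [h4]
    have h5 : ((l:ℝ) : ℂ) • (A ^ n) f' + g' - g₀ = ((l:ℝ) : ℂ) • (A ^ n) f' + (g' - g₀) := by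
      abel
    rw [h5]
    calc ‖((l:ℝ) : ℂ) • (A ^ n) f' + (g' - g₀)‖
        ≤ ‖((l:ℝ) : ℂ) • (A ^ n) f'‖ + ‖g' - g₀‖ := norm_add_le _ _
      _ < ε' := by
          have hns := norm_smul (β := C₀(ℝ, ℂ)) (((l:ℝ) : ℂ)) ((A ^ n) f')
          rw [hlC] at hns
          have h6 : l * ‖(A ^ n) f'‖ ≤ l * An :=
            mul_le_mul_of_nonneg_left hAf (by positivity)
          have h7 : ‖g' - g₀‖ = ‖g₀ - g'‖ := norm_sub_rev _ _
          rw [hns, h7]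
          linarith


theorem semi_transitive_not_cesaro_both_directions
    (M δ : ℝ) (hM : 0 < M) (hδ0 : 0 < δ) (hMδ : 2 + 2 * δ ≤ M) (hδ : 1 ≤ δ)
    (w : ℝ → ℝ)
    (hw1 : ∀ t ≤ (-1 : ℝ), w t = M)
    (hw2 : ∀ t ∈ Set.Icc (-1 : ℝ) 1, w t = M + ((t + 1) / 2) * (1 + δ - M))
    (hw3 : ∀ t ≥ (1 : ℝ), w t = 1 + δ)
    (T S : C₀(ℝ, ℂ) →L[ℂ] C₀(ℝ, ℂ))
    (hT : ∀ (f : C₀(ℝ, ℂ)) (t : ℝ), T f t = (w t : ℂ) * f (t - 1))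
    (hS : ∀ (f : C₀(ℝ, ℂ)) (t : ℝ), S f t = ((w (t + 1) : ℂ))⁻¹ * f (t + 1))
    (hST : ∀ f, S (T f) = f) (hTS : ∀ f, T (S f) = f) :
    (IsSemiTransitive T ∧ IsSemiTransitive S) ∧
      (¬ IsCesaroHyperTransitive T ∧ ¬ IsCesaroHyperTransitive S) := by
  have hwM : ∀ t, 1 + δ ≤ w t ∧ w t ≤ M := wbounds M δ w hδ0 hMδ hw1 hw2 hw3
  have hM0 : (0:ℝ) < M := by linarith
  have hδ1 : (0:ℝ) < 1 + δ := by linarith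
  have hab1 : (1 + δ) * M⁻¹ < 1 := by
    have h1 : (1 + δ) / M < 1 := (div_lt_one hM0).mpr (by nlinarith)
    rwa [div_eq_mul_inv] at h1
  constructor
  · constructor
    · exact key_semitrans T S (1+δ) M⁻¹ (fun R => M ^ (R+1)) hδ1 (inv_pos.mpr hM0) hab1
        (fun R => pow_pos hM0 (R+1)) hTS
        (fun R f hf n => normT_supp M δ w hδ0 hMδ hwM hw3 T hT R f hf n)
        (fun R f hf n => normS_supp M δ w hδ0 hMδ hwM hw1 S hS R f hf n)
    · exact key_semitrans S T M⁻¹ (1+δ) (fun R => M ^ (R+1)) (inv_pos.mpr hM0) hδ1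
        (by rwa [mul_comm] at hab1)
        (fun R => pow_pos hM0 (R+1)) hST
        (fun R f hf n => normS_supp M δ w hδ0 hMδ hwM hw1 S hS R f hf n)
        (fun R f hf n => normT_supp M δ w hδ0 hMδ hwM hw3 T hT R f hf n)
  constructor
  · -- T is not Cesàro hyper-transitive
    intro h
    obtain ⟨n, hmono, hpos, hk⟩ := h (Metric.ball g0 1) (Metric.ball 0 1)
      Metric.isOpen_ball Metric.isOpen_ball
      ⟨g0, Metric.mem_ball_self one_pos⟩ ⟨0, Metric.mem_ball_self one_pos⟩
    obtain ⟨f, hf1, hf2⟩ := hk 0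
    set m : ℕ := n 0 with hmdef
    have hm : 1 ≤ m := hpos 0
    have hm0 : (0:ℝ) < m := by exact_mod_cast hm
    have hf1' : 1 < ‖f‖ := by
      rw [Metric.mem_ball, dist_eq_norm] at hf1
      have h1 := norm_sub_norm_le g0 f
      have h2 : ‖g0 - f‖ = ‖f - g0‖ := norm_sub_rev _ _
      have h3 := g0_norm
      linarith
    rw [Metric.mem_ball, dist_eq_norm, sub_zero] at hf2
    set v : C₀(ℝ, ℂ) := ((m:ℕ):ℂ)⁻¹ • (T ^ m) f with hv
    have hms := norm_smul (β := C₀(ℝ, ℂ)) (((m:ℕ):ℂ))⁻¹ ((T ^ m) f)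
    rw [norm_inv, Complex.norm_natCast] at hms
    rw [← hv] at hms
    have hTm := normT_ge M δ w hδ0 hMδ hwM T hT f m
    have h2m : (m:ℝ) < 2 ^ m := by exact_mod_cast (Nat.lt_two_pow_self (n := m))
    have h2δ : (2:ℝ) ^ m ≤ (1+δ) ^ m := pow_le_pow_left₀ (by norm_num) (by linarith) m
    have hlow : (m:ℝ) < ‖(T ^ m) f‖ := by
      nlinarith [pow_pos hδ1 m]
    have hbig : 1 < ‖v‖ := by
      rw [hms]
      rw [lt_inv_mul_iff₀ hm0]
      linarith
    linarith
  · -- S is not Cesàro hyper-transitive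
    intro h
    obtain ⟨n, hmono, hpos, hk⟩ := h (Metric.ball 0 1) (Metric.ball g0 1)
      Metric.isOpen_ball Metric.isOpen_ball
      ⟨0, Metric.mem_ball_self one_pos⟩ ⟨g0, Metric.mem_ball_self one_pos⟩
    obtain ⟨f, hf1, hf2⟩ := hk 0
    set m : ℕ := n 0 with hmdef
    have hm : 1 ≤ m := hpos 0
    have hm0 : (0:ℝ) < m := by exact_mod_cast hm
    have hm1 : (1:ℝ) ≤ m := by exact_mod_cast hm
    rw [Metric.mem_ball, dist_eq_norm, sub_zero] at hf1
    rw [Metric.mem_ball, dist_eq_norm] at hf2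
    set v : C₀(ℝ, ℂ) := ((m:ℕ):ℂ)⁻¹ • (S ^ m) f with hv
    have hms := norm_smul (β := C₀(ℝ, ℂ)) (((m:ℕ):ℂ))⁻¹ ((S ^ m) f)
    rw [norm_inv, Complex.norm_natCast] at hms
    rw [← hv] at hms
    have hSm := normS_le M δ w hδ0 hMδ hwM S hS f m
    -- upper bound on the norm of the scaled vector
    have hsmall : (m:ℝ)⁻¹ * ‖(S ^ m) f‖ < 1 := by
      have hpow : ((1+δ)⁻¹) ^ m ≤ 1 :=
        pow_le_one₀ (by positivity) (by rw [inv_le_one_iff₀]; right; linarith)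
      have hminv : (m:ℝ)⁻¹ ≤ 1 := by
        rw [inv_le_one_iff₀]; right; exact hm1
      have hn0 : 0 ≤ ‖(S ^ m) f‖ := norm_nonneg _
      have hf0 : 0 ≤ ‖f‖ := norm_nonneg _
      have h1 : ‖(S ^ m) f‖ < 1 := by
        calc ‖(S ^ m) f‖ ≤ ((1+δ)⁻¹) ^ m * ‖f‖ := hSm
          _ ≤ 1 * ‖f‖ := mul_le_mul_of_nonneg_right hpow hf0
          _ = ‖f‖ := one_mul _
          _ < 1 := hf1
      calc (m:ℝ)⁻¹ * ‖(S ^ m) f‖ ≤ 1 * ‖(S ^ m) f‖ :=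
            mul_le_mul_of_nonneg_right hminv hn0
        _ = ‖(S ^ m) f‖ := one_mul _
        _ < 1 := h1
    -- but anything in the ball around g0 has norm > 1
    have hbig : 1 < ‖v‖ := by
      have h1 := norm_sub_norm_le g0 v
      have h2 : ‖g0 - v‖ = ‖v - g0‖ := norm_sub_rev _ _
      have h3 := g0_norm
      linarith
    rw [← hms] at hsmall
    linarith
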